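/- Let P1, λ13, λ23, N2, N3 be positive reals, and let (λ12(n)) and (P2(n)) be sequences of positive reals with λ12(n) → ∞ and P2(n)/λ12(n) → ∞ as n → ∞. Define R_CF(n) = (1/2)·log(1 + P1·λ13/N3 + P1·P2(n)·λ12(n)·λ23/(P1·(λ13·N2 + λ12(n)·N3) + P2(n)·λ23·N2 + N2·N3)) and B(n) = (1/2)·log(1 + P1·λ13/N3 + P1·λ12(n)/N2). Then B(n) − R_CF(n) → 0 as n → ∞ (and R_CF(n) < B(n) for all n). -/

import Mathlib

open Filter

/-- If `λ12(n) → ∞` and `P2(n)/λ12(n) → ∞`, then the gap between the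
broadcast cut-set bound `B(n)` and the compress-and-forward rate `R_CF(n)` tends to
`0` (and `R_CF(n) < B(n)` for all `n`). -/
theorem stmt12 (P1 lam13 lam23 N2 N3 : ℝ)
    (hP1 : 0 < P1) (hl13 : 0 < lam13) (hl23 : 0 < lam23)
    (hN2 : 0 < N2) (hN3 : 0 < N3)
    (lam12 P2 : ℕ → ℝ) (hl12pos : ∀ n, 0 < lam12 n) (hP2pos : ∀ n, 0 < P2 n)
    (hl12 : Filter.Tendsto lam12 Filter.atTop Filter.atTop)
    (hratio : Filter.Tendsto (fun n => P2 n / lam12 n) Filter.atTop Filter.atTop) :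
    Filter.Tendsto
      (fun n =>
        (1 / 2) * Real.log (1 + P1 * lam13 / N3 + P1 * lam12 n / N2)
          - (1 / 2) * Real.log (1 + P1 * lam13 / N3 +
              P1 * P2 n * lam12 n * lam23 /
                (P1 * (lam13 * N2 + lam12 n * N3) + P2 n * lam23 * N2 + N2 * N3)))
      Filter.atTop (nhds 0) ∧
    ∀ n,
      (1 / 2) * Real.log (1 + P1 * lam13 / N3 +
          P1 * P2 n * lam12 n * lam23 /
            (P1 * (lam13 * N2 + lam12 n * N3) + P2 n * lam23 * N2 + N2 * N3))
        < (1 / 2) * Real.log (1 + P1 * lam13 / N3 + P1 * lam12 n / N2) := by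
  set a : ℝ := 1 + P1 * lam13 / N3 with ha_def
  have ha : 0 < a := by positivity
  set X : ℕ → ℝ := fun n => P1 * P2 n * lam12 n * lam23 /
      (P1 * (lam13 * N2 + lam12 n * N3) + P2 n * lam23 * N2 + N2 * N3) with hX_def
  have hD : ∀ n, 0 < P1 * (lam13 * N2 + lam12 n * N3) + P2 n * lam23 * N2 + N2 * N3 := by
    intro n; have := hl12pos n; have := hP2pos n; positivity
  have hXpos : ∀ n, 0 < X n := by
    intro n; have := hl12pos n; have := hP2pos n; have := hD n; positivity
  have hlt : ∀ n, X n < P1 * lam12 n / N2 := by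
    intro n
    rw [hX_def, div_lt_div_iff₀ (hD n) hN2]
    have h1 := hl12pos n; have h2 := hP2pos n
    nlinarith [mul_pos (mul_pos hP1 h1)
      (by positivity : (0:ℝ) < P1 * lam13 * N2 + P1 * lam12 n * N3 + N2 * N3)]
  -- basic limits
  have hP2top : Tendsto P2 atTop atTop := by
    have h := hratio.atTop_mul_atTop₀ hl12
    refine h.congr fun n => ?_
    exact div_mul_cancel₀ _ (hl12pos n).ne'
  have hinv : Tendsto (fun n => (P2 n)⁻¹) atTop (nhds 0) := hP2top.inv_tendsto_atTop
  have hlr : Tendsto (fun n => lam12 n / P2 n) atTop (nhds 0) := by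
    have h := hratio.inv_tendsto_atTop
    refine h.congr fun n => ?_
    simp only [Pi.inv_apply, inv_div]
  -- f n = X n / (P1 * lam12 n / N2) → 1
  have hd : Tendsto (fun n => P1 * lam13 * N2 * (P2 n)⁻¹ + P1 * N3 * (lam12 n / P2 n)
      + lam23 * N2 + N2 * N3 * (P2 n)⁻¹) atTop (nhds (lam23 * N2)) := by
    have := (((hinv.const_mul (P1 * lam13 * N2)).add (hlr.const_mul (P1 * N3))).add
      (tendsto_const_nhds (x := lam23 * N2))).add (hinv.const_mul (N2 * N3))
    simpa using this
  have hf : Tendsto (fun n => X n / (P1 * lam12 n / N2)) atTop (nhds 1) := by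
    have h := (tendsto_const_nhds (x := N2 * lam23) (f := atTop (α := ℕ))).div hd
      (by positivity)
    rw [show N2 * lam23 / (lam23 * N2) = 1 by rw [mul_comm]; exact div_self (by positivity)] at h
    refine h.congr fun n => ?_
    have h1 := (hl12pos n).ne'; have h2 := (hP2pos n).ne'; have h3 := (hD n).ne'
    have hp := hP2pos n; have hlp := hl12pos n
    have hdpos : (0:ℝ) < P1 * lam13 * N2 * (P2 n)⁻¹ + P1 * N3 * (lam12 n / P2 n)
        + lam23 * N2 + N2 * N3 * (P2 n)⁻¹ := by positivity
    simp only [Pi.div_apply, hX_def]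
    rw [div_eq_div_iff hdpos.ne' (by positivity : P1 * lam12 n / N2 ≠ 0)]
    field_simp
  have hg : Tendsto (fun n => a / (P1 * lam12 n / N2)) atTop (nhds 0) := by
    have h := Tendsto.div_atTop (tendsto_const_nhds (x := a * N2 / P1))
      hl12
    refine h.congr fun n => ?_
    have h1 := (hl12pos n).ne'
    field_simp
  -- ratio → 1
  have hr : Tendsto (fun n => (a + X n) / (a + P1 * lam12 n / N2)) atTop (nhds 1) := by
    have h := (hg.add hf).div (hg.add (tendsto_const_nhds (x := (1:ℝ)))) (by norm_num)
    have h' : Tendsto (fun n => (a / (P1 * lam12 n / N2) + X n / (P1 * lam12 n / N2)) /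
        (a / (P1 * lam12 n / N2) + 1)) atTop (nhds 1) := by simpa [Pi.div_def] using h
    refine h'.congr fun n => ?_
    have h0 := hl12pos n
    have h1 := (hl12pos n).ne'
    have hcl : P1 * lam12 n / N2 ≠ 0 := by positivity
    have hacl : a + P1 * lam12 n / N2 ≠ 0 :=
      (add_pos ha (by positivity : (0:ℝ) < P1 * lam12 n / N2)).ne'
    have hXa : (0:ℝ) < X n := hXpos n
    field_simp
  have hlog : Tendsto (fun n => Real.log ((a + X n) / (a + P1 * lam12 n / N2)))
      atTop (nhds 0) := by
    have h := (Real.continuousAt_log one_ne_zero).tendsto.comp hr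
    simpa [Function.comp_def] using h
  constructor
  · have h := hlog.const_mul (-(1/2 : ℝ))
    rw [mul_zero] at h
    refine h.congr fun n => ?_
    have hV : a + X n ≠ 0 := (add_pos ha (hXpos n)).ne'
    have hU : a + P1 * lam12 n / N2 ≠ 0 :=
      (add_pos ha (by have := hl12pos n; positivity : (0:ℝ) < P1 * lam12 n / N2)).ne'
    rw [Real.log_div hV hU]
    ring
  · intro n
    have hV : (0:ℝ) < a + X n := add_pos ha (hXpos n)
    have h := Real.log_lt_log hV (by linarith [hlt n] : a + X n < a + P1 * lam12 n / N2)
    nlinarith [h]
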